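/- Let A ∈ R^{n×n} be nonsingular and suppose that for some k ∈ {1,...,n-1} all k×k minors of A are nonzero and have the same sign. Then all (n-k)×(n-k) minors of the unsigned adjugate D adj(A) D^{-1} (where D is the alternating-sign diagonal matrix) are nonzero and have the same sign. -/
import Mathlib


open Matrix

/-- Number of sign changes in a list of reals: count of consecutive pairs with negative product. -/
noncomputable def signChanges (l : List ℝ) : ℕ :=
  ((l.zip l.tail).filter (fun p => decide (p.1 * p.2 < 0))).length

/-- s^-: number of sign changes after deleting all zero entries. -/
noncomputable def sMinus {n : ℕ} (y : Fin n → ℝ) : ℕ :=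
  signChanges ((List.ofFn y).filter (fun a => decide (a ≠ 0)))

/-- Vectors obtained from `y` by replacing each zero entry with `+1` or `-1`. -/
def completions {n : ℕ} (y : Fin n → ℝ) : Set (Fin n → ℝ) :=
  {z | ∀ i, (y i ≠ 0 ∧ z i = y i) ∨ (y i = 0 ∧ (z i = 1 ∨ z i = -1))}

/-- s^+: maximal number of sign changes over all replacements of zero entries by ±1. -/
noncomputable def sPlus {n : ℕ} (y : Fin n → ℝ) : ℕ :=
  sSup ((fun z => signChanges (List.ofFn z)) '' completions y)

/-- The alternating-sign diagonal matrix with diagonal (1, -1, 1, ...). -/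
noncomputable def Dalt (n : ℕ) : Matrix (Fin n) (Fin n) ℝ :=
  Matrix.diagonal (fun i => (-1 : ℝ) ^ (i : ℕ))

/-- All k×k minors of A are nonzero with sign ε. -/
def minorsSign {n : ℕ} (k : ℕ) (A : Matrix (Fin n) (Fin n) ℝ) (ε : ℝ) : Prop :=
  ∀ r c : Fin k → Fin n, StrictMono r → StrictMono c →
    0 < ε * (A.submatrix r c).det

/-- A is strictly sign-regular of order k. -/
def IsSSR {n : ℕ} (k : ℕ) (A : Matrix (Fin n) (Fin n) ℝ) : Prop :=
  ∃ ε : ℝ, (ε = 1 ∨ ε = -1) ∧ minorsSign k A ε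


section SSRAux
open Finset Equiv

section aux
/-- The base set {0, 1, ..., p-1} inside Fin n. -/
def baseSet (n p : ℕ) (hp : p ≤ n) : Finset (Fin n) :=
  (Finset.range p).attachFin (fun m hm => lt_of_lt_of_le (Finset.mem_range.mp hm) hp)

lemma mem_baseSet {n p : ℕ} (hp : p ≤ n) {x : Fin n} :
    x ∈ baseSet n p hp ↔ (x : ℕ) < p := by
  simp [baseSet, Finset.mem_attachFin]

lemma baseSet_card (n p : ℕ) (hp : p ≤ n) : (baseSet n p hp).card = p := by
  rw [baseSet, Finset.card_attachFin, Finset.card_range]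

lemma compl_card {n p q : ℕ} (hpq : p + q = n) (s : Finset (Fin n)) (h : s.card = p) :
    sᶜ.card = q := by
  rw [Finset.card_compl, h, Fintype.card_fin]; omega

lemma sum_baseSet (n p : ℕ) (hp : p ≤ n) :
    ∑ x ∈ baseSet n p hp, (x : ℕ) = ∑ i ∈ Finset.range p, i := by
  have himg : (baseSet n p hp).image (fun x : Fin n => (x : ℕ)) = Finset.range p := by
    ext m
    simp only [Finset.mem_image, mem_baseSet, Finset.mem_range]
    constructor
    · rintro ⟨x, hx, rfl⟩; exact hx
    · intro hm; exact ⟨⟨m, lt_of_lt_of_le hm hp⟩, hm, rfl⟩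
  rw [← himg, Finset.sum_image (fun x _ y _ e => Fin.ext e)]
end aux

/-- The equiv from `Fin p ⊕ Fin q` to `Fin n` enumerating `s` then `sᶜ` in increasing order. -/
noncomputable def bEquiv {n p q : ℕ} (s : Finset (Fin n)) (h : s.card = p) (h' : sᶜ.card = q) :
    Fin p ⊕ Fin q ≃ Fin n := by
  refine Equiv.ofBijective (Sum.elim (s.orderEmbOfFin h) (sᶜ.orderEmbOfFin h'))
    ((Fintype.bijective_iff_injective_and_card _).mpr ⟨?_, by
      simp [← h, ← h', Finset.card_add_card_compl s]⟩)
  rintro (i | i) (j | j) hij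
  · simp only [Sum.elim_inl] at hij
    exact congrArg Sum.inl ((s.orderEmbOfFin h).injective hij)
  · exfalso
    simp only [Sum.elim_inl, Sum.elim_inr] at hij
    have h1 := s.orderEmbOfFin_mem h i
    have h2 := sᶜ.orderEmbOfFin_mem h' j
    rw [hij] at h1
    exact (Finset.mem_compl.mp h2) h1
  · exfalso
    simp only [Sum.elim_inl, Sum.elim_inr] at hij
    have h1 := s.orderEmbOfFin_mem h j
    have h2 := sᶜ.orderEmbOfFin_mem h' i
    rw [hij] at h2
    exact (Finset.mem_compl.mp h2) h1
  · simp only [Sum.elim_inr] at hij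
    exact congrArg Sum.inr ((sᶜ.orderEmbOfFin h').injective hij)

lemma bEquiv_inl {n p q : ℕ} (s : Finset (Fin n)) (h : s.card = p) (h' : sᶜ.card = q) (i : Fin p) :
    bEquiv s h h' (Sum.inl i) = s.orderEmbOfFin h i := rfl

lemma bEquiv_inr {n p q : ℕ} (s : Finset (Fin n)) (h : s.card = p) (h' : sᶜ.card = q) (i : Fin q) :
    bEquiv s h h' (Sum.inr i) = sᶜ.orderEmbOfFin h' i := rfl

/-- Swapping an element `u ∈ s` with an adjacent `v ∉ s` transforms the order embedding by
composing with `Equiv.swap u v`. -/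
lemma orderEmbOfFin_swap {n p : ℕ} {s : Finset (Fin n)} (h : s.card = p) {u v : Fin n}
    (hu : u ∈ s) (hv : v ∉ s) (hadj : (u : ℕ) = (v : ℕ) + 1 ∨ (v : ℕ) = (u : ℕ) + 1)
    (h2 : (insert v (s.erase u)).card = p) (i : Fin p) :
    (insert v (s.erase u)).orderEmbOfFin h2 i = Equiv.swap u v (s.orderEmbOfFin h i) := by
  have huv : u ≠ v := fun e => hv (e ▸ hu)
  have hmem : ∀ j : Fin p, Equiv.swap u v (s.orderEmbOfFin h j) ∈ insert v (s.erase u) := by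
    intro j
    by_cases hj : s.orderEmbOfFin h j = u
    · rw [hj, Equiv.swap_apply_left]
      exact Finset.mem_insert_self _ _
    · have hj2 : s.orderEmbOfFin h j ≠ v := fun e => hv (e ▸ s.orderEmbOfFin_mem h j)
      rw [Equiv.swap_apply_of_ne_of_ne hj hj2]
      exact Finset.mem_insert_of_mem (Finset.mem_erase.mpr ⟨hj, s.orderEmbOfFin_mem h j⟩)
  have hmono : StrictMono (fun j => Equiv.swap u v (s.orderEmbOfFin h j)) := by
    intro i j hij
    have hab : s.orderEmbOfFin h i < s.orderEmbOfFin h j := (s.orderEmbOfFin h).strictMono hij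
    set a := s.orderEmbOfFin h i with ha
    set b := s.orderEmbOfFin h j with hb
    have hav : a ≠ v := fun e => hv (e ▸ s.orderEmbOfFin_mem h i)
    have hbv : b ≠ v := fun e => hv (e ▸ s.orderEmbOfFin_mem h j)
    show Equiv.swap u v a < Equiv.swap u v b
    by_cases hau : a = u
    · rw [hau, Equiv.swap_apply_left, Equiv.swap_apply_of_ne_of_ne (by rw [← hau]; exact hab.ne' ) hbv]
      -- goal: v < b, knowing u < b (hau ▸ hab), b ≠ v
      rcases hadj with hc | hc
      · -- u = v + 1 : v < u < b
        have : (v:ℕ) < (u:ℕ) := by omega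
        calc v < u := this
          _ < b := hau ▸ hab
      · -- v = u + 1 : b > u, b ≠ v so b ≥ u+2 > v ... or b = v impossible
        have h1 : (u:ℕ) < (b:ℕ) := hau ▸ hab
        have h2 : (b:ℕ) ≠ (v:ℕ) := fun e => hbv (Fin.ext e)
        have : (v:ℕ) < (b:ℕ) := by omega
        exact this
    · by_cases hbu : b = u
      · rw [hbu, Equiv.swap_apply_left, Equiv.swap_apply_of_ne_of_ne hau hav]
        rcases hadj with hc | hc
        · have h1 : (a:ℕ) < (u:ℕ) := hbu ▸ hab
          have h2 : (a:ℕ) ≠ (v:ℕ) := fun e => hav (Fin.ext e)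
          have : (a:ℕ) < (v:ℕ) := by omega
          exact this
        · have h1 : (a:ℕ) < (u:ℕ) := hbu ▸ hab
          have : (a:ℕ) < (v:ℕ) := by omega
          exact this
      · rw [Equiv.swap_apply_of_ne_of_ne hau hav, Equiv.swap_apply_of_ne_of_ne hbu hbv]
        exact hab
  exact (congrFun (Finset.orderEmbOfFin_unique h2 hmem hmono) i).symm

lemma sign_bEquiv {n p q : ℕ} (hpq : p + q = n) (hp : p ≤ n) (N : ℕ) :
    ∀ (s : Finset (Fin n)) (h : s.card = p) (h' : sᶜ.card = q), (∑ x ∈ s, (x : ℕ)) = N →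
    Equiv.Perm.sign ((bEquiv (baseSet n p hp) (baseSet_card n p hp)
        (compl_card hpq _ (baseSet_card n p hp))).symm.trans (bEquiv s h h'))
      = (-1) ^ (N + ∑ i ∈ Finset.range p, i) := by
  induction N using Nat.strong_induction_on with
  | _ N IH =>
  intro s h h' hsum
  by_cases hall : ∀ x ∈ s, (x : ℕ) < p
  · -- s is the base set
    have hs : s = baseSet n p hp := by
      apply Finset.eq_of_subset_of_card_le
      · intro x hx; exact (mem_baseSet hp).mpr (hall x hx)
      · rw [baseSet_card, h]
    subst hs
    rw [show bEquiv (baseSet n p hp) h h' = bEquiv (baseSet n p hp) (baseSet_card n p hp)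
        (compl_card hpq _ (baseSet_card n p hp)) from rfl, Equiv.symm_trans_self]
    have hN : N = ∑ i ∈ Finset.range p, i := by
      rw [← hsum, sum_baseSet]
    rw [hN]
    have : Even (∑ i ∈ Finset.range p, i + ∑ i ∈ Finset.range p, i) :=
      Even.add_self _
    simp [Even.neg_one_pow this]
  · -- find an adjacent swap decreasing the sum
    push_neg at hall
    obtain ⟨x, hxs, hxp⟩ := hall
    -- there is an element below x not in s
    have hF : (sᶜ.filter (· < x)).Nonempty := by
      by_contra hFe
      rw [Finset.not_nonempty_iff_eq_empty] at hFe
      have hsub : ((Finset.range ((x : ℕ) + 1)).attachFin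
          (fun m hm => lt_of_lt_of_le (Finset.mem_range.mp hm) x.2)) ⊆ s := by
        intro y hy
        rw [Finset.mem_attachFin, Finset.mem_range] at hy
        rcases lt_or_eq_of_le (Nat.lt_succ_iff.mp hy) with hlt | heq
        · by_contra hys
          have : y ∈ sᶜ.filter (· < x) := by
            simp [Finset.mem_filter, Finset.mem_compl, hys]
            exact hlt
          rw [hFe] at this
          exact absurd this (Finset.notMem_empty y)
        · rwa [show y = x from Fin.ext heq]
      have := Finset.card_le_card hsub
      rw [Finset.card_attachFin, Finset.card_range, h] at this
      omega
    set v := (sᶜ.filter (· < x)).max' hF with hv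
    have hvprop := (sᶜ.filter (· < x)).max'_mem hF
    rw [Finset.mem_filter, Finset.mem_compl] at hvprop
    obtain ⟨hvns, hvx⟩ := hvprop
    have hvn : (v : ℕ) + 1 < n := lt_of_le_of_lt (by exact hvx) x.2
    set u : Fin n := ⟨(v : ℕ) + 1, hvn⟩ with hu_def
    have huv : (u : ℕ) = (v : ℕ) + 1 := rfl
    have hune : u ≠ v := by
      intro e; exact absurd (congrArg Fin.val e) (by omega)
    have hus : u ∈ s := by
      rcases lt_or_eq_of_le (show (u : ℕ) ≤ (x : ℕ) by
        have : (v : ℕ) < (x : ℕ) := hvx; omega) with hlt | heq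
      · by_contra hns
        have hmemF : u ∈ sᶜ.filter (· < x) := by
          simp [Finset.mem_filter, Finset.mem_compl, hns]
          exact hlt
        have := Finset.le_max' _ u hmemF
        rw [← hv] at this
        have : (u : ℕ) ≤ (v : ℕ) := this
        omega
      · rwa [show u = x from Fin.ext heq]
    -- the swapped set
    set s' := insert v (s.erase u) with hs'
    have hp0 : 0 < p := by
      rw [← h]; exact Finset.card_pos.mpr ⟨x, hxs⟩
    have hvnes : v ∉ s.erase u := fun hc => hvns (Finset.mem_of_mem_erase hc)
    have hcard' : s'.card = p := by
      rw [hs', Finset.card_insert_of_notMem hvnes, Finset.card_erase_of_mem hus, h]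
      omega
    have hcompl' : s'ᶜ.card = q := compl_card hpq _ hcard'
    have huN : (u : ℕ) ≤ N := by
      rw [← hsum]
      exact Finset.single_le_sum (f := fun y : Fin n => (y : ℕ)) (fun _ _ => Nat.zero_le _) hus
    have hsum' : ∑ y ∈ s', (y : ℕ) = N - 1 := by
      have h2 : (u : ℕ) + ∑ y ∈ s.erase u, (y : ℕ) = N := by
        rw [← hsum]; simpa using Finset.add_sum_erase s (fun y : Fin n => (y : ℕ)) hus
      rw [hs', Finset.sum_insert hvnes]
      omega
    have hN1 : 1 ≤ N := by
      have h2 : (u : ℕ) + ∑ y ∈ s.erase u, (y : ℕ) = N := by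
        rw [← hsum]; simpa using Finset.add_sum_erase s (fun y : Fin n => (y : ℕ)) hus
      omega
    -- complement of s'
    have hcompl_eq : s'ᶜ = insert u (sᶜ.erase v) := by
      ext z
      simp only [hs', Finset.mem_compl, Finset.mem_insert, Finset.mem_erase]
      by_cases hz1 : z = u
      · subst hz1; simp [hus, hune]
      · by_cases hz2 : z = v
        · subst hz2; simp [hvns, hune.symm, Ne.symm hune]
        · simp [hz1, hz2]
    -- the equivalence relation
    have hequiv : bEquiv s' hcard' hcompl' = (bEquiv s h h').trans (Equiv.swap u v) := by
      apply Equiv.ext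
      rintro (i | i)
      · exact orderEmbOfFin_swap h hus hvns (Or.inl huv) hcard' i
      · show s'ᶜ.orderEmbOfFin hcompl' i = _
        have hc2 : (insert u (sᶜ.erase v)).card = q := by rw [← hcompl_eq]; exact hcompl'
        have key := orderEmbOfFin_swap h' (Finset.mem_compl.mpr hvns)
          (fun hc => (Finset.mem_compl.mp hc) hus) (Or.inr huv) hc2 i
        have heq : (fun j => (insert u (sᶜ.erase v)).orderEmbOfFin hc2 j)
            = s'ᶜ.orderEmbOfFin hcompl' :=
          Finset.orderEmbOfFin_unique hcompl'
            (fun j => hcompl_eq.symm ▸ Finset.orderEmbOfFin_mem _ hc2 j)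
            (Finset.orderEmbOfFin _ hc2).strictMono
        rw [← congrFun heq i, key, Equiv.swap_comm]
        rfl
    have hIH := IH (N - 1) (by omega) s' hcard' hcompl' hsum'
    rw [hequiv, ← Equiv.trans_assoc] at hIH
    set B := bEquiv (baseSet n p hp) (baseSet_card n p hp)
      (compl_card hpq _ (baseSet_card n p hp)) with hB
    have hmul : (B.symm.trans (bEquiv s h h')).trans (Equiv.swap u v)
        = (Equiv.swap u v) * (B.symm.trans (bEquiv s h h')) := rfl
    rw [hmul, Equiv.Perm.sign_mul, Equiv.Perm.sign_swap hune] at hIH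
    have h3 : Equiv.Perm.sign (B.symm.trans (bEquiv s h h'))
        = (-1) * ((-1) ^ (N - 1 + ∑ i ∈ Finset.range p, i)) := by
      rw [← hIH, ← mul_assoc]
      simp
    rw [h3, ← pow_succ']
    congr 1
    omega

/-- Jacobi block identity: det C * det of top-left block of C⁻¹ = det of bottom-right block of C. -/
lemma jacBlock {p q : ℕ} (C : Matrix (Fin p ⊕ Fin q) (Fin p ⊕ Fin q) ℝ)
    (hC : IsUnit C.det) :
    C.det * ((C⁻¹).toBlocks₁₁).det = (C.toBlocks₂₂).det := by
  have hinv : C * C⁻¹ = 1 := Matrix.mul_nonsing_inv C hC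
  set P := (C⁻¹).toBlocks₁₁
  set R := (C⁻¹).toBlocks₂₁
  have hC' : C = fromBlocks C.toBlocks₁₁ C.toBlocks₁₂ C.toBlocks₂₁ C.toBlocks₂₂ :=
    (fromBlocks_toBlocks C).symm
  have hCi : C⁻¹ = fromBlocks P (C⁻¹).toBlocks₁₂ R (C⁻¹).toBlocks₂₂ :=
    (fromBlocks_toBlocks (C⁻¹)).symm
  have hmul : fromBlocks (C.toBlocks₁₁ * P + C.toBlocks₁₂ * R)
      (C.toBlocks₁₁ * (C⁻¹).toBlocks₁₂ + C.toBlocks₁₂ * (C⁻¹).toBlocks₂₂)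
      (C.toBlocks₂₁ * P + C.toBlocks₂₂ * R)
      (C.toBlocks₂₁ * (C⁻¹).toBlocks₁₂ + C.toBlocks₂₂ * (C⁻¹).toBlocks₂₂)
      = (1 : Matrix (Fin p ⊕ Fin q) (Fin p ⊕ Fin q) ℝ) := by
    rw [← fromBlocks_multiply, ← hC', ← hCi, hinv]
  rw [← fromBlocks_one] at hmul
  have h11 : C.toBlocks₁₁ * P + C.toBlocks₁₂ * R = 1 := by
    have := congrArg Matrix.toBlocks₁₁ hmul
    simpa only [toBlocks_fromBlocks₁₁] using this
  have h21 : C.toBlocks₂₁ * P + C.toBlocks₂₂ * R = 0 := by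
    have := congrArg Matrix.toBlocks₂₁ hmul
    simpa only [toBlocks_fromBlocks₂₁] using this
  have key : C * fromBlocks P 0 R 1 = fromBlocks 1 C.toBlocks₁₂ 0 C.toBlocks₂₂ := by
    conv_lhs => rw [hC']
    rw [fromBlocks_multiply]
    rw [h11, h21]
    simp
  have := congrArg Matrix.det key
  rw [Matrix.det_mul, Matrix.det_fromBlocks_zero₁₂, Matrix.det_fromBlocks_zero₂₁] at this
  simpa using this


noncomputable def shuffle {n p q : ℕ} (hpq : p + q = n) (hp : p ≤ n) (s : Finset (Fin n))
    (h : s.card = p) (h' : sᶜ.card = q) : Equiv.Perm (Fin n) :=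
  (bEquiv (baseSet n p hp) (baseSet_card n p hp)
    (compl_card hpq _ (baseSet_card n p hp))).symm.trans (bEquiv s h h')

lemma sign_shuffle {n p q : ℕ} (hpq : p + q = n) (hp : p ≤ n) (s : Finset (Fin n))
    (h : s.card = p) (h' : sᶜ.card = q) :
    Equiv.Perm.sign (shuffle hpq hp s h h')
      = (-1) ^ ((∑ x ∈ s, (x : ℕ)) + ∑ i ∈ Finset.range p, i) :=
  sign_bEquiv hpq hp _ s h h' rfl

/-- Jacobi's identity for minors of the inverse. -/
lemma inv_minor {n p q : ℕ} (hpq : p + q = n) (hp : p ≤ n) (A : Matrix (Fin n) (Fin n) ℝ)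
    (hA : IsUnit A.det) (sr sc : Finset (Fin n)) (hr : sr.card = p) (hc : sc.card = p)
    (hr' : srᶜ.card = q) (hc' : scᶜ.card = q) :
    ((Equiv.Perm.sign (shuffle hpq hp sr hr hr') : ℤ) : ℝ)
      * ((Equiv.Perm.sign (shuffle hpq hp sc hc hc') : ℤ) : ℝ) * A.det *
      ((A⁻¹).submatrix (sr.orderEmbOfFin hr) (sc.orderEmbOfFin hc)).det
    = (A.submatrix (scᶜ.orderEmbOfFin hc') (srᶜ.orderEmbOfFin hr')).det := by
  set B := bEquiv (baseSet n p hp) (baseSet_card n p hp)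
    (compl_card hpq _ (baseSet_card n p hp)) with hB
  set e := bEquiv sc hc hc' with he
  set f := bEquiv sr hr hr' with hf
  set C := A.submatrix ⇑e ⇑f with hC
  have hCinv : C⁻¹ = (A⁻¹).submatrix ⇑f ⇑e := by
    apply Matrix.inv_eq_right_inv
    rw [hC, Matrix.submatrix_mul_equiv, Matrix.mul_nonsing_inv _ hA, Matrix.submatrix_one_equiv]
  -- determinant of C
  have hCeq : C = (A.submatrix ⇑e ⇑e).submatrix id ⇑(f.trans e.symm) := by
    ext i j
    simp [hC, Matrix.submatrix_apply]
  have hdetC : C.det = ((Equiv.Perm.sign (f.trans e.symm) : ℤ) : ℝ) * A.det := by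
    rw [hCeq, Matrix.det_permute', Matrix.det_submatrix_equiv_self]
  -- sign of f.trans e.symm via conjugation
  have hconj : f.trans e.symm
      = ((B.symm.symm.trans ((shuffle hpq hp sr hr hr').trans
          (shuffle hpq hp sc hc hc').symm)).trans B.symm) := by
    apply Equiv.ext
    intro x
    simp [shuffle, hB, he, hf]
  have hsgn : Equiv.Perm.sign (f.trans e.symm)
      = Equiv.Perm.sign (shuffle hpq hp sr hr hr')
        * Equiv.Perm.sign (shuffle hpq hp sc hc hc') := by
    rw [hconj, Equiv.Perm.sign_symm_trans_trans]
    have : (shuffle hpq hp sr hr hr').trans (shuffle hpq hp sc hc hc').symm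
        = (shuffle hpq hp sc hc hc').symm * (shuffle hpq hp sr hr hr') := rfl
    rw [this, Equiv.Perm.sign_mul, Equiv.Perm.sign_symm]
    exact mul_comm _ _
  -- unit of det C
  have hdetCunit : IsUnit C.det := by
    rw [hdetC]
    rcases Int.units_eq_one_or (Equiv.Perm.sign (f.trans e.symm)) with hs | hs <;>
      simp [hs, hA, hA.ne_zero]
  have hjac := jacBlock C hdetCunit
  have h11 : (C⁻¹).toBlocks₁₁
      = (A⁻¹).submatrix (sr.orderEmbOfFin hr) (sc.orderEmbOfFin hc) := by
    rw [hCinv]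
    ext i j
    rfl
  have h22 : C.toBlocks₂₂
      = A.submatrix (scᶜ.orderEmbOfFin hc') (srᶜ.orderEmbOfFin hr') := by
    rw [hC]
    ext i j
    rfl
  rw [h11, h22] at hjac
  rw [← hjac, hdetC, hsgn]
  push_cast
  ring

end SSRAux

theorem stmt2 {n k : ℕ} (A : Matrix (Fin n) (Fin n) ℝ) (hA : A.det ≠ 0)
    (hk1 : 1 ≤ k) (hk2 : k ≤ n - 1) (hssr : IsSSR k A) :
    IsSSR (n - k) (Dalt n * A.adjugate * (Dalt n)⁻¹) := by
  obtain ⟨ε, hεpm, hmin⟩ := hssr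
  have hAu : IsUnit A.det := isUnit_iff_ne_zero.mpr hA
  have hpq : (n - k) + k = n := by omega
  have hple : n - k ≤ n := by omega
  refine ⟨if 0 < A.det ^ (n - k - 1) then ε else -ε, ?_, ?_⟩
  · split_ifs
    · exact hεpm
    · rcases hεpm with h | h
      · right; simp [h]
      · left; simp [h]
  · intro r c hrmono hcmono
    have hD : Dalt n * Dalt n = 1 := by
      rw [Dalt, Matrix.diagonal_mul_diagonal]
      have he : (fun i : Fin n => (-1:ℝ)^(i:ℕ) * (-1:ℝ)^(i:ℕ)) = fun _ => (1:ℝ) := by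
        funext i
        rw [← pow_add]
        exact Even.neg_one_pow (Even.add_self _)
      rw [he, Matrix.diagonal_one]
    have hDinv : (Dalt n)⁻¹ = Dalt n := Matrix.inv_eq_right_inv hD
    have hadj : A.adjugate = A.det • A⁻¹ := by
      rw [Matrix.inv_def, smul_smul, Ring.inverse_eq_inv, mul_inv_cancel₀ hA, one_smul]
    obtain ⟨m, hm⟩ : ∃ m, n - k = m + 1 := ⟨n - k - 1, by omega⟩
    have hsub : (Dalt n * A.adjugate * (Dalt n)⁻¹).submatrix r c
        = Matrix.diagonal (fun i => (-1:ℝ)^((r i : ℕ)))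
          * ((A.det • A⁻¹).submatrix r c)
          * Matrix.diagonal (fun j => (-1:ℝ)^((c j : ℕ))) := by
      rw [hDinv, hadj]
      ext i j
      simp only [Matrix.submatrix_apply, Matrix.mul_diagonal, Matrix.diagonal_mul, Dalt,
        Matrix.smul_apply, smul_eq_mul]
    have hdet1 : ((Dalt n * A.adjugate * (Dalt n)⁻¹).submatrix r c).det
        = ((-1:ℝ)^(∑ i, ((r i : ℕ))) * (-1:ℝ)^(∑ i, ((c i : ℕ))))
          * (A.det ^ m * A.det * ((A⁻¹).submatrix r c).det) := by
      have hss : (A.det • A⁻¹).submatrix r c = A.det • ((A⁻¹).submatrix r c) := rfl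
      rw [hsub, Matrix.det_mul, Matrix.det_mul, Matrix.det_diagonal, Matrix.det_diagonal,
        hss, Matrix.det_smul,
        Finset.prod_pow_eq_pow_sum, Finset.prod_pow_eq_pow_sum]
      simp only [Fintype.card_fin, smul_eq_mul]
      rw [show A.det ^ (n - k) = A.det ^ m * A.det from by rw [hm, pow_succ]]
      ring
    have hrinj : Function.Injective r := hrmono.injective
    have hcinj : Function.Injective c := hcmono.injective
    have hrc : (Finset.univ.image r).card = n - k := by
      rw [Finset.card_image_of_injective _ hrinj]; simp
    have hcc : (Finset.univ.image c).card = n - k := by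
      rw [Finset.card_image_of_injective _ hcinj]; simp
    have hrcomp : (Finset.univ.image r)ᶜ.card = k := compl_card hpq _ hrc
    have hccomp : (Finset.univ.image c)ᶜ.card = k := compl_card hpq _ hcc
    have hr_eq : r = ⇑((Finset.univ.image r).orderEmbOfFin hrc) :=
      Finset.orderEmbOfFin_unique hrc
        (fun x => Finset.mem_image_of_mem r (Finset.mem_univ x)) hrmono
    have hc_eq : c = ⇑((Finset.univ.image c).orderEmbOfFin hcc) :=
      Finset.orderEmbOfFin_unique hcc
        (fun x => Finset.mem_image_of_mem c (Finset.mem_univ x)) hcmono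
    have hsum_r : ∑ x ∈ Finset.univ.image r, (x : ℕ) = ∑ i, ((r i : ℕ)) :=
      Finset.sum_image (fun x _ y _ hxy => hrinj hxy)
    have hsum_c : ∑ x ∈ Finset.univ.image c, (x : ℕ) = ∑ i, ((c i : ℕ)) :=
      Finset.sum_image (fun x _ y _ hxy => hcinj hxy)
    have hJ := inv_minor hpq hple A hAu (Finset.univ.image r) (Finset.univ.image c)
      hrc hcc hrcomp hccomp
    rw [sign_shuffle, sign_shuffle, hsum_r, hsum_c, ← hr_eq, ← hc_eq] at hJ
    simp only [Units.val_pow_eq_pow_val, Units.val_neg, Units.val_one, Int.cast_pow,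
      Int.cast_neg, Int.cast_one] at hJ
    have hpar : ∀ (aa bb : ℕ), (-1:ℝ)^(aa + ∑ i ∈ Finset.range (n-k), i)
        * (-1:ℝ)^(bb + ∑ i ∈ Finset.range (n-k), i) = (-1:ℝ)^aa * (-1:ℝ)^bb := by
      intro aa bb
      rw [pow_add, pow_add]
      have hTT : (-1:ℝ)^(∑ i ∈ Finset.range (n-k), i)
          * (-1:ℝ)^(∑ i ∈ Finset.range (n-k), i) = 1 := by
        rw [← pow_add]; exact Even.neg_one_pow (Even.add_self _)
      linear_combination ((-1:ℝ)^aa * (-1:ℝ)^bb) * hTT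
    rw [hpar] at hJ
    have key : ((Dalt n * A.adjugate * (Dalt n)⁻¹).submatrix r c).det
        = A.det ^ m
          * (A.submatrix (⇑((Finset.univ.image c)ᶜ.orderEmbOfFin hccomp))
              (⇑((Finset.univ.image r)ᶜ.orderEmbOfFin hrcomp))).det := by
      have hFne : ((-1:ℝ)^(∑ i, ((r i : ℕ))) * (-1:ℝ)^(∑ i, ((c i : ℕ))) * A.det) ≠ 0 :=
        mul_ne_zero (mul_ne_zero (pow_ne_zero _ (by norm_num)) (pow_ne_zero _ (by norm_num))) hA
      apply mul_left_cancel₀ hFne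
      rw [hdet1]
      linear_combination ((-1:ℝ)^(∑ i, ((r i : ℕ))) * (-1:ℝ)^(∑ i, ((c i : ℕ)))
        * A.det ^ m * A.det) * hJ
    have hkmin := hmin (⇑((Finset.univ.image c)ᶜ.orderEmbOfFin hccomp))
      (⇑((Finset.univ.image r)ᶜ.orderEmbOfFin hrcomp))
      ((Finset.orderEmbOfFin _ hccomp).strictMono) ((Finset.orderEmbOfFin _ hrcomp).strictMono)
    rw [key]
    by_cases hu : 0 < A.det ^ (n - k - 1)
    · rw [if_pos hu]
      rw [show n - k - 1 = m from by omega] at hu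
      nlinarith [mul_pos hu hkmin]
    · rw [if_neg hu]
      have hne : A.det ^ (n - k - 1) ≠ 0 := pow_ne_zero _ hA
      rw [show n - k - 1 = m from by omega] at hu hne
      have hu' : A.det ^ m < 0 := lt_of_le_of_ne (not_lt.mp hu) hne
      nlinarith [mul_pos (neg_pos.mpr hu') hkmin]
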